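/- For every θ ∈ ℝ, the function ρ is differentiable at θ with derivative ρ'(θ) = ∫_ℝ (1/(exp(2θy)+1))² (y − θ) φ(y−θ) dy. In particular, the derivative of ρ at θ coincides with the derivative at θ of the function b ↦ ∫_ℝ (1/(exp(2θy)+1))² φ(y−b) dy in which the coefficient inside the logistic weight is frozen at θ. -/

import Mathlib

open Real MeasureTheory Metric

/-- The standard normal density. -/
noncomputable def gaussPdf (x : ℝ) : ℝ :=
  (Real.sqrt (2 * Real.pi))⁻¹ * Real.exp (-(x ^ 2) / 2)

/-- ρ(a) = ∫ (1/(exp(2ay)+1))² φ(y−a) dy. -/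
noncomputable def ρ (a : ℝ) : ℝ :=
  ∫ y : ℝ, (1 / (Real.exp (2 * a * y) + 1)) ^ 2 * gaussPdf (y - a)

lemma gaussPdf_pos (x : ℝ) : 0 < gaussPdf x := by
  unfold gaussPdf
  positivity

lemma gaussPdf_cont : Continuous gaussPdf := by
  unfold gaussPdf
  continuity

lemma hasDerivAt_gaussPdf (y b : ℝ) :
    HasDerivAt (fun b => gaussPdf (y - b)) ((y - b) * gaussPdf (y - b)) b := by
  have h0 : HasDerivAt (fun b : ℝ => -((y - b) ^ 2) / 2) (y - b) b := by
    have h1 : HasDerivAt (fun b : ℝ => y - b) (-1) b := (hasDerivAt_id b).const_sub y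
    have h2 := ((h1.pow 2).neg.div_const 2)
    refine h2.congr_deriv ?_
    norm_num
  have h3 := (h0.exp).const_mul ((Real.sqrt (2 * Real.pi))⁻¹)
  refine h3.congr_deriv ?_
  unfold gaussPdf
  ring

lemma hasDerivAt_w (y a : ℝ) :
    HasDerivAt (fun a => (1 / (Real.exp (2 * a * y) + 1)) ^ 2)
      (-(4 * y * Real.exp (2 * a * y)) / (Real.exp (2 * a * y) + 1) ^ 3) a := by
  have h1 : HasDerivAt (fun a : ℝ => 2 * a * y) (2 * y) a := by
    simpa using ((hasDerivAt_id a).const_mul 2).mul_const y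
  have h2 := (h1.exp.add_const 1)
  have hne : Real.exp (2 * a * y) + 1 ≠ 0 := by positivity
  have h4 := (h2.inv hne).pow 2
  have heq : ((fun a : ℝ => Real.exp (2 * a * y) + 1)⁻¹ ^ 2)
      = fun a : ℝ => (1 / (Real.exp (2 * a * y) + 1)) ^ 2 := by
    funext a; rw [one_div]; rfl
  rw [heq] at h4
  refine h4.congr_deriv ?_
  simp only [Pi.inv_apply]
  norm_num
  field_simp
  ring

lemma exp_cube_bound (x y : ℝ) :
    |(-(4 * y * Real.exp x)) / (Real.exp x + 1) ^ 3| ≤ |y| := by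
  have hE := Real.exp_pos x
  rw [abs_div, abs_neg, div_le_iff₀ (by positivity)]
  have h1 : |4 * y * Real.exp x| = 4 * |y| * Real.exp x := by
    rw [abs_mul, abs_mul, abs_of_pos hE]
    norm_num
  have h2 : |(Real.exp x + 1) ^ 3| = (Real.exp x + 1) ^ 3 := abs_of_pos (by positivity)
  rw [h1, h2]
  have h3 : 0 ≤ (Real.exp x + 1) ^ 3 - 4 * Real.exp x := by
    nlinarith [sq_nonneg (Real.exp x - 1), hE.le]
  nlinarith [abs_nonneg y, mul_nonneg (abs_nonneg y) h3]

lemma w_le_one (x : ℝ) : (1 / (Real.exp x + 1)) ^ 2 ≤ 1 := by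
  have hE := Real.exp_pos x
  have : 1 / (Real.exp x + 1) ≤ 1 := by
    rw [div_le_one (by positivity)]; linarith
  nlinarith [this, le_of_lt (by positivity : (0:ℝ) < 1 / (Real.exp x + 1))]

/-- Gaussian shifted bound. -/
lemma gauss_shift_bound {θ a y : ℝ} (ha : |a - θ| ≤ 1) :
    gaussPdf (y - a) ≤ (Real.sqrt (2 * Real.pi))⁻¹ * Real.exp (2⁻¹) *
      Real.exp (-(4⁻¹) * (y - θ) ^ 2) := by
  unfold gaussPdf
  rw [mul_assoc, ← Real.exp_add]
  have hc : (0:ℝ) < (Real.sqrt (2 * Real.pi))⁻¹ := by positivity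
  apply mul_le_mul_of_nonneg_left _ hc.le
  apply Real.exp_le_exp.2
  have h1 : (y - θ) ^ 2 ≤ 2 * (y - a) ^ 2 + 2 * (a - θ) ^ 2 := by nlinarith [sq_nonneg ((y - a) - (a - θ))]
  have h2 : (a - θ) ^ 2 ≤ 1 := by nlinarith [abs_nonneg (a - θ), sq_abs (a - θ), ha]
  nlinarith

noncomputable def gaussBound (θ : ℝ) (y : ℝ) : ℝ :=
  (2 * |y - θ| + (|θ| + 1)) * ((Real.sqrt (2 * Real.pi))⁻¹ * Real.exp (2⁻¹) *
    Real.exp (-(4⁻¹) * (y - θ) ^ 2))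

lemma integrable_gaussBound (θ : ℝ) : Integrable (gaussBound θ) := by
  set K : ℝ := (Real.sqrt (2 * Real.pi))⁻¹ * Real.exp (2⁻¹) with hK
  have i1 : Integrable fun x : ℝ => |x| * Real.exp (-(4⁻¹ : ℝ) * x ^ 2) := by
    have := (integrable_mul_exp_neg_mul_sq (by norm_num : (0:ℝ) < 4⁻¹)).abs
    refine this.congr ?_
    filter_upwards with x
    rw [abs_mul, abs_of_pos (Real.exp_pos _)]
  have i2 : Integrable fun x : ℝ => Real.exp (-(4⁻¹ : ℝ) * x ^ 2) :=
    integrable_exp_neg_mul_sq (by norm_num)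
  have i3 : Integrable fun x : ℝ => (2 * |x| + (|θ| + 1)) * (K * Real.exp (-(4⁻¹ : ℝ) * x ^ 2)) := by
    have := ((i1.const_mul (2 * K)).add (i2.const_mul ((|θ| + 1) * K)))
    refine this.congr ?_
    filter_upwards with x
    simp only [Pi.add_apply]
    ring
  have := i3.comp_sub_right θ
  exact this.congr (by filter_upwards with x; rfl)

lemma integrable_gauss_shift (θ : ℝ) : Integrable fun y : ℝ => gaussPdf (y - θ) := by
  have i2 : Integrable fun x : ℝ => Real.exp (-(2⁻¹ : ℝ) * x ^ 2) :=
    integrable_exp_neg_mul_sq (by norm_num)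
  have i3 := (i2.const_mul ((Real.sqrt (2 * Real.pi))⁻¹)).comp_sub_right θ
  refine i3.congr ?_
  filter_upwards with x
  unfold gaussPdf
  congr 1
  ring_nf

section main

variable (θ : ℝ)

/-- continuity of the logistic weight -/
lemma cont_w (a : ℝ) : Continuous fun y : ℝ => (1 / (Real.exp (2 * a * y) + 1)) ^ 2 := by
  apply Continuous.pow
  exact Continuous.div continuous_const (by continuity) (fun y => by positivity)

lemma cont_w' (y : ℝ) : Continuous fun a : ℝ => (1 / (Real.exp (2 * a * y) + 1)) ^ 2 := by
  apply Continuous.pow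
  exact Continuous.div continuous_const (by continuity) (fun a => by positivity)

/-- The full derivative integrand for the first statement. -/
noncomputable def F1' (a y : ℝ) : ℝ :=
  (-(4 * y * Real.exp (2 * a * y)) / (Real.exp (2 * a * y) + 1) ^ 3) * gaussPdf (y - a)
    + (1 / (Real.exp (2 * a * y) + 1)) ^ 2 * ((y - a) * gaussPdf (y - a))

lemma hasDerivAt_F1 (y a : ℝ) :
    HasDerivAt (fun a => (1 / (Real.exp (2 * a * y) + 1)) ^ 2 * gaussPdf (y - a))
      (F1' a y) a :=
  (hasDerivAt_w y a).mul (hasDerivAt_gaussPdf y a)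

lemma abs_y_bound {θ y : ℝ} : |y| ≤ |y - θ| + |θ| := by
  calc |y| = |(y - θ) + θ| := by ring_nf
    _ ≤ |y - θ| + |θ| := abs_add_le _ _

lemma F1'_bound {a y : ℝ} (ha : a ∈ ball θ 1) : ‖F1' a y‖ ≤ gaussBound θ y := by
  have haθ : |a - θ| ≤ 1 := by
    have := mem_ball.mp ha
    rw [Real.dist_eq] at this
    linarith
  have hφ : (0:ℝ) ≤ gaussPdf (y - a) := (gaussPdf_pos _).le
  have t1 : ‖(-(4 * y * Real.exp (2 * a * y)) / (Real.exp (2 * a * y) + 1) ^ 3) * gaussPdf (y - a)‖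
      ≤ |y| * gaussPdf (y - a) := by
    rw [Real.norm_eq_abs, abs_mul, abs_of_nonneg hφ]
    exact mul_le_mul_of_nonneg_right (exp_cube_bound _ _) hφ
  have t2 : ‖(1 / (Real.exp (2 * a * y) + 1)) ^ 2 * ((y - a) * gaussPdf (y - a))‖
      ≤ |y - a| * gaussPdf (y - a) := by
    rw [Real.norm_eq_abs, abs_mul, abs_mul, abs_of_nonneg hφ,
      abs_of_nonneg (by positivity : (0:ℝ) ≤ (1 / (Real.exp (2 * a * y) + 1)) ^ 2)]
    have hw := w_le_one (2 * a * y)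
    nlinarith [abs_nonneg (y - a), mul_nonneg (abs_nonneg (y - a)) hφ]
  have hy : |y| ≤ |y - θ| + |θ| := abs_y_bound
  have hya : |y - a| ≤ |y - θ| + 1 := by
    calc |y - a| = |(y - θ) + (θ - a)| := by ring_nf
      _ ≤ |y - θ| + |θ - a| := abs_add_le _ _
      _ ≤ |y - θ| + 1 := by rw [abs_sub_comm] at haθ; linarith
  have hgs := gauss_shift_bound (y := y) haθ
  calc ‖F1' a y‖ ≤ ‖(-(4 * y * Real.exp (2 * a * y)) / (Real.exp (2 * a * y) + 1) ^ 3) * gaussPdf (y - a)‖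
        + ‖(1 / (Real.exp (2 * a * y) + 1)) ^ 2 * ((y - a) * gaussPdf (y - a))‖ := norm_add_le _ _
    _ ≤ (2 * |y - θ| + (|θ| + 1)) * gaussPdf (y - a) := by nlinarith [mul_nonneg (abs_nonneg y) hφ]
    _ ≤ gaussBound θ y := by
        unfold gaussBound
        exact mul_le_mul_of_nonneg_left hgs (by positivity)

lemma F2'_bound {b y : ℝ} (hb : b ∈ ball θ 1) :
    ‖(1 / (Real.exp (2 * θ * y) + 1)) ^ 2 * ((y - b) * gaussPdf (y - b))‖ ≤ gaussBound θ y := by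
  have hbθ : |b - θ| ≤ 1 := by
    have := mem_ball.mp hb
    rw [Real.dist_eq] at this
    linarith
  have hφ : (0:ℝ) ≤ gaussPdf (y - b) := (gaussPdf_pos _).le
  have t2 : ‖(1 / (Real.exp (2 * θ * y) + 1)) ^ 2 * ((y - b) * gaussPdf (y - b))‖
      ≤ |y - b| * gaussPdf (y - b) := by
    rw [Real.norm_eq_abs, abs_mul, abs_mul, abs_of_nonneg hφ,
      abs_of_nonneg (by positivity : (0:ℝ) ≤ (1 / (Real.exp (2 * θ * y) + 1)) ^ 2)]
    have hw := w_le_one (2 * θ * y)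
    nlinarith [abs_nonneg (y - b), mul_nonneg (abs_nonneg (y - b)) hφ]
  have hyb : |y - b| ≤ |y - θ| + 1 := by
    calc |y - b| = |(y - θ) + (θ - b)| := by ring_nf
      _ ≤ |y - θ| + |θ - b| := abs_add_le _ _
      _ ≤ |y - θ| + 1 := by rw [abs_sub_comm] at hbθ; linarith
  have hgs := gauss_shift_bound (y := y) hbθ
  calc ‖(1 / (Real.exp (2 * θ * y) + 1)) ^ 2 * ((y - b) * gaussPdf (y - b))‖
      ≤ |y - b| * gaussPdf (y - b) := t2
    _ ≤ (2 * |y - θ| + (|θ| + 1)) * gaussPdf (y - b) := by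
        nlinarith [abs_nonneg (y - θ), abs_nonneg θ]
    _ ≤ gaussBound θ y := by
        unfold gaussBound
        exact mul_le_mul_of_nonneg_left hgs (by positivity)

lemma integrable_F_at (a : ℝ) :
    Integrable fun y : ℝ => (1 / (Real.exp (2 * a * y) + 1)) ^ 2 * gaussPdf (y - a) := by
  refine (integrable_gauss_shift a).mono' ?_ ?_
  · exact ((cont_w a).mul (gaussPdf_cont.comp (by continuity))).aestronglyMeasurable
  · filter_upwards with y
    rw [Real.norm_eq_abs, abs_mul, abs_of_nonneg (gaussPdf_pos _).le,
      abs_of_nonneg (by positivity : (0:ℝ) ≤ (1 / (Real.exp (2 * a * y) + 1)) ^ 2)]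
    nlinarith [w_le_one (2 * a * y), (gaussPdf_pos (y - a)).le]

end main

/-- the odd auxiliary integrand -/
noncomputable def hOdd (θ y : ℝ) : ℝ :=
  (-(4 * y * Real.exp (2 * θ * y)) / (Real.exp (2 * θ * y) + 1) ^ 3) * gaussPdf (y - θ)

lemma hOdd_neg (θ y : ℝ) : hOdd θ (-y) = - hOdd θ y := by
  unfold hOdd
  have hE : Real.exp (2 * θ * y) ≠ 0 := (Real.exp_pos _).ne'
  have hE1 : Real.exp (2 * θ * y) + 1 ≠ 0 := by positivity
  have h1 : Real.exp (2 * θ * (-y)) = (Real.exp (2 * θ * y))⁻¹ := by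
    rw [← Real.exp_neg]; congr 1; ring
  have h2 : gaussPdf (-y - θ) = gaussPdf (y - θ) * (Real.exp (2 * θ * y))⁻¹ := by
    unfold gaussPdf
    rw [← Real.exp_neg, mul_assoc, ← Real.exp_add]
    congr 1
    ring
  rw [h1, h2]
  field_simp
  ring

lemma integral_hOdd (θ : ℝ) : ∫ y : ℝ, hOdd θ y = 0 := by
  have h1 : ∫ y : ℝ, hOdd θ (-y) = ∫ y : ℝ, hOdd θ y := integral_neg_eq_self (hOdd θ) volume
  have h2 : ∫ y : ℝ, hOdd θ (-y) = - ∫ y : ℝ, hOdd θ y := by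
    simp_rw [hOdd_neg θ]
    exact integral_neg _
  linarith [h1, h2]

lemma integrable_target (θ : ℝ) :
    Integrable fun y : ℝ =>
      (1 / (Real.exp (2 * θ * y) + 1)) ^ 2 * ((y - θ) * gaussPdf (y - θ)) := by
  refine (integrable_gaussBound θ).mono' ?_ ?_
  · apply Continuous.aestronglyMeasurable
    exact (cont_w θ).mul (continuous_id.sub continuous_const |>.mul
      (gaussPdf_cont.comp (continuous_id.sub continuous_const)))
  · filter_upwards with y
    exact F2'_bound θ (mem_ball_self one_pos)

theorem stmt_14 (θ : ℝ) :
    HasDerivAt ρ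
      (∫ y : ℝ, (1 / (Real.exp (2 * θ * y) + 1)) ^ 2 * ((y - θ) * gaussPdf (y - θ))) θ ∧
    HasDerivAt (fun b : ℝ => ∫ y : ℝ, (1 / (Real.exp (2 * θ * y) + 1)) ^ 2 * gaussPdf (y - b))
      (∫ y : ℝ, (1 / (Real.exp (2 * θ * y) + 1)) ^ 2 * ((y - θ) * gaussPdf (y - θ))) θ := by
  constructor
  · -- first statement
    have key := hasDerivAt_integral_of_dominated_loc_of_deriv_le (μ := volume)
      (F := fun a y => (1 / (Real.exp (2 * a * y) + 1)) ^ 2 * gaussPdf (y - a))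
      (F' := fun a y => F1' a y) (x₀ := θ) (bound := gaussBound θ) (ball_mem_nhds θ one_pos)
      (Filter.Eventually.of_forall fun a =>
        ((cont_w a).mul (gaussPdf_cont.comp (by continuity))).aestronglyMeasurable)
      (integrable_F_at θ)
      (by
        apply Continuous.aestronglyMeasurable
        unfold F1'
        apply Continuous.add
        · exact (Continuous.div (by continuity) (by continuity)
            (fun y => by positivity)).mul (gaussPdf_cont.comp (by continuity))
        · exact (cont_w θ).mul ((continuous_id.sub continuous_const).mul
            (gaussPdf_cont.comp (continuous_id.sub continuous_const))))
      (Filter.Eventually.of_forall fun y a ha => F1'_bound θ ha)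
      (integrable_gaussBound θ)
      (Filter.Eventually.of_forall fun y a ha => hasDerivAt_F1 y a)
    have hd := key.2
    have hi := key.1
    have ig := integrable_target θ
    have hsum : (fun y : ℝ => F1' θ y) = fun y : ℝ =>
        hOdd θ y + (1 / (Real.exp (2 * θ * y) + 1)) ^ 2 * ((y - θ) * gaussPdf (y - θ)) := by
      funext y; unfold F1' hOdd; ring
    have ih : Integrable (hOdd θ) := by
      have := hi.sub ig
      refine this.congr ?_
      filter_upwards with y
      unfold F1' hOdd
      simp only [Pi.sub_apply]
      ring
    have hval : (∫ y : ℝ, F1' θ y)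
        = ∫ y : ℝ, (1 / (Real.exp (2 * θ * y) + 1)) ^ 2 * ((y - θ) * gaussPdf (y - θ)) := by
      rw [hsum, integral_add ih ig, integral_hOdd, zero_add]
    rw [hval] at hd
    exact hd
  · -- second statement
    have key := hasDerivAt_integral_of_dominated_loc_of_deriv_le (μ := volume)
      (F := fun b y => (1 / (Real.exp (2 * θ * y) + 1)) ^ 2 * gaussPdf (y - b))
      (F' := fun b y => (1 / (Real.exp (2 * θ * y) + 1)) ^ 2 * ((y - b) * gaussPdf (y - b)))
      (x₀ := θ) (bound := gaussBound θ) (ball_mem_nhds θ one_pos)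
      (Filter.Eventually.of_forall fun b =>
        ((cont_w θ).mul (gaussPdf_cont.comp (by continuity))).aestronglyMeasurable)
      (integrable_F_at θ)
      ((integrable_target θ).aestronglyMeasurable)
      (Filter.Eventually.of_forall fun y b hb => F2'_bound θ hb)
      (integrable_gaussBound θ)
      (Filter.Eventually.of_forall fun y b hb =>
        (hasDerivAt_gaussPdf y b).const_mul ((1 / (Real.exp (2 * θ * y) + 1)) ^ 2))
    exact key.2
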